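/- Let K = ∏_{k=1}^N [a_k, b_k] be a compact N-dimensional interval in ℝ^N and let 𝓡(K) be the vector lattice of all Riemann integrable functions on K, i.e. all bounded functions f : K → ℝ whose set of points of discontinuity has Lebesgue measure zero. Let (T_n) be a sequence of weakly nonlinear (sublinear and translatable) and monotone operators from 𝓡(K) into itself such that T_n(h)(x) → h(x) for Lebesgue-almost every x ∈ K for each of the test functions h ∈ {1, pr_1, …, pr_N, −pr_1, …, −pr_N, Σ_{k=1}^N pr_k²} (restricted to K). Then T_n(f)(x) → f(x) for Lebesgue-almost every x ∈ K, for every f ∈ 𝓡(K). -/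

import Mathlib

open MeasureTheory Filter Topology Set

/-- **Corollary `cor1`.** Korovkin-type theorem for a.e. convergence on
the vector lattice `𝓡(K)` of Riemann integrable functions (bounded functions whose
set of discontinuity points is Lebesgue-null) on a compact `N`-dimensional interval
`K = ∏ [a_k, b_k]`, for weakly nonlinear and monotone operators from `𝓡(K)` into
itself. -/
theorem korovkin_ae_riemannIntegrable {N : ℕ} (a b : Fin N → ℝ) (hab : ∀ k, a k ≤ b k)
    (K : Set (Fin N → ℝ)) (hK : K = Icc a b)
    (μ : Measure K)
    (hμ : μ = Measure.comap Subtype.val (volume : Measure (Fin N → ℝ)))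
    -- `𝓡(K)`: bounded functions whose set of discontinuity points is Lebesgue-null
    (R : Set (K → ℝ))
    (hR : R = {f : K → ℝ | (∃ M : ℝ, ∀ x, |f x| ≤ M) ∧ μ {x | ¬ ContinuousAt f x} = 0})
    -- `(T n)` is a sequence of weakly nonlinear and monotone operators on `𝓡(K)`
    (T : ℕ → (K → ℝ) → (K → ℝ))
    (hmap : ∀ n, ∀ f ∈ R, T n f ∈ R)
    (hsubadd : ∀ n, ∀ f ∈ R, ∀ g ∈ R, T n (f + g) ≤ T n f + T n g)
    (hhom : ∀ n, ∀ (α : ℝ), 0 ≤ α → ∀ f ∈ R, T n (α • f) = α • T n f)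
    (hmono : ∀ n, ∀ f ∈ R, ∀ g ∈ R, f ≤ g → T n f ≤ T n g)
    (htrans : ∀ n, ∀ f ∈ R, ∀ (α : ℝ), 0 ≤ α →
      T n (f + α • (fun _ : K => (1 : ℝ))) = T n f + α • T n (fun _ : K => (1 : ℝ)))
    -- a.e. convergence on the test functions
    (htest1 : ∀ᵐ x ∂μ, Tendsto (fun n => T n (fun _ => 1) x) atTop (𝓝 1))
    (htestpr : ∀ k : Fin N, ∀ᵐ x ∂μ,
      Tendsto (fun n => T n (fun y : K => (y : Fin N → ℝ) k) x) atTop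
        (𝓝 ((x : Fin N → ℝ) k)))
    (htestprneg : ∀ k : Fin N, ∀ᵐ x ∂μ,
      Tendsto (fun n => T n (fun y : K => -((y : Fin N → ℝ) k)) x) atTop
        (𝓝 (-((x : Fin N → ℝ) k))))
    (htestsq : ∀ᵐ x ∂μ,
      Tendsto (fun n => T n (fun y : K => ∑ k, ((y : Fin N → ℝ) k) ^ 2) x) atTop
        (𝓝 (∑ k, ((x : Fin N → ℝ) k) ^ 2))) :
    ∀ f ∈ R, ∀ᵐ x ∂μ, Tendsto (fun n => T n f x) atTop (𝓝 (f x)) := by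
  classical
  intro f hf
  -- membership helper lemmas
  have memR_of : ∀ g : K → ℝ, Continuous g → (∃ M, ∀ y, |g y| ≤ M) → g ∈ R := by
    intro g hc hb
    rw [hR]
    refine ⟨hb, ?_⟩
    have he : {x : K | ¬ ContinuousAt g x} = ∅ := by
      ext x; simp [hc.continuousAt]
    simp [he]
  have Radd : ∀ g₁ ∈ R, ∀ g₂ ∈ R, g₁ + g₂ ∈ R := by
    intro g₁ h₁ g₂ h₂
    rw [hR] at h₁ h₂ ⊢
    obtain ⟨⟨M₁, hM₁⟩, hn₁⟩ := h₁
    obtain ⟨⟨M₂, hM₂⟩, hn₂⟩ := h₂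
    refine ⟨⟨M₁ + M₂, fun y => ?_⟩, ?_⟩
    · calc |(g₁ + g₂) y| = |g₁ y + g₂ y| := rfl
        _ ≤ |g₁ y| + |g₂ y| := abs_add_le _ _
        _ ≤ M₁ + M₂ := add_le_add (hM₁ y) (hM₂ y)
    · refine measure_mono_null (fun x hx => ?_) (measure_union_null hn₁ hn₂)
      by_contra hx'
      simp only [Set.mem_union, Set.mem_setOf_eq, not_or, not_not] at hx'
      exact hx (hx'.1.add hx'.2)
  have Rsmul : ∀ (c : ℝ), ∀ g ∈ R, c • g ∈ R := by
    intro c g hg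
    rw [hR] at hg ⊢
    obtain ⟨⟨M, hM⟩, hn⟩ := hg
    refine ⟨⟨|c| * M, fun y => ?_⟩, ?_⟩
    · simp only [Pi.smul_apply, smul_eq_mul, abs_mul]
      exact mul_le_mul_of_nonneg_left (hM y) (abs_nonneg c)
    · refine measure_mono_null (fun x hx => ?_) hn
      simp only [Set.mem_setOf_eq] at hx ⊢
      intro hca
      exact hx (hca.const_smul c)
  have hzeroR : (0 : K → ℝ) ∈ R := memR_of 0 continuous_const ⟨0, fun y => by simp⟩
  have oneR : (fun _ : K => (1 : ℝ)) ∈ R := memR_of _ continuous_const ⟨1, fun y => by simp⟩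
  have hT0 : ∀ n, T n (0 : K → ℝ) = 0 := by
    intro n
    have h := hhom n 0 le_rfl 0 hzeroR
    simpa using h
  have Rsum : ∀ (s : Finset (Fin N)) (g : Fin N → (K → ℝ)), (∀ k ∈ s, g k ∈ R) →
      (∑ k ∈ s, g k) ∈ R := by
    intro s g
    induction s using Finset.cons_induction with
    | empty => intro _; simpa using hzeroR
    | cons i s hi ih =>
      intro hgs
      rw [Finset.sum_cons]
      exact Radd _ (hgs i (Finset.mem_cons_self i s)) _
        (ih fun k hk => hgs k (Finset.mem_cons_of_mem hk))
  have Tsum : ∀ n (s : Finset (Fin N)) (g : Fin N → (K → ℝ)), (∀ k ∈ s, g k ∈ R) →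
      T n (∑ k ∈ s, g k) ≤ ∑ k ∈ s, T n (g k) := by
    intro n s g
    induction s using Finset.cons_induction with
    | empty => intro _; simp [hT0 n]
    | cons i s hi ih =>
      intro hgs
      rw [Finset.sum_cons, Finset.sum_cons]
      calc T n (g i + ∑ k ∈ s, g k) ≤ T n (g i) + T n (∑ k ∈ s, g k) :=
            hsubadd n (g i) (hgs i (Finset.mem_cons_self i s)) _
              (Rsum s g fun k hk => hgs k (Finset.mem_cons_of_mem hk))
        _ ≤ T n (g i) + ∑ k ∈ s, T n (g k) :=
            add_le_add le_rfl (ih fun k hk => hgs k (Finset.mem_cons_of_mem hk))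
  have htransZ : ∀ n, ∀ g ∈ R, ∀ α : ℝ,
      T n (g + α • (fun _ : K => (1 : ℝ))) = T n g + α • T n (fun _ : K => (1 : ℝ)) := by
    intro n g hg α
    rcases le_or_gt 0 α with hα | hα
    · exact htrans n g hg α hα
    · have hmem : g + α • (fun _ : K => (1 : ℝ)) ∈ R := Radd g hg _ (Rsmul α _ oneR)
      have h := htrans n _ hmem (-α) (by linarith)
      have hgg : g + α • (fun _ : K => (1 : ℝ)) + (-α) • (fun _ : K => (1 : ℝ)) = g := by
        funext y
        simp only [Pi.add_apply, Pi.smul_apply, smul_eq_mul, mul_one]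
        ring
      rw [hgg] at h
      funext y
      have hy := congrFun h y
      simp only [Pi.add_apply, Pi.smul_apply, smul_eq_mul] at hy ⊢
      linarith
  -- bounds for projection coordinates
  have hbnd : ∀ (y : K) (k : Fin N), |(y : Fin N → ℝ) k| ≤ max |a k| |b k| := by
    intro y k
    have hy : (y : Fin N → ℝ) ∈ Icc a b := by rw [← hK]; exact y.2
    have h1 : a k ≤ (y : Fin N → ℝ) k := hy.1 k
    have h2 : (y : Fin N → ℝ) k ≤ b k := hy.2 k
    have h3 := le_max_left |a k| |b k|
    have h4 := le_max_right |a k| |b k|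
    have h5 := neg_abs_le (a k)
    have h6 := le_abs_self (b k)
    rw [abs_le]
    constructor <;> linarith
  have hmem_pr : ∀ k : Fin N, (fun y : K => (y : Fin N → ℝ) k) ∈ R := by
    intro k
    refine memR_of _ ((continuous_apply k).comp continuous_subtype_val)
      ⟨max |a k| |b k|, fun y => hbnd y k⟩
  have hmem_npr : ∀ k : Fin N, (fun y : K => -((y : Fin N → ℝ) k)) ∈ R := by
    intro k
    refine memR_of _ ((continuous_apply k).comp continuous_subtype_val).neg
      ⟨max |a k| |b k|, fun y => by rw [abs_neg]; exact hbnd y k⟩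
  have hmem_q : (fun y : K => ∑ k, ((y : Fin N → ℝ) k) ^ 2) ∈ R := by
    refine memR_of _ ?_ ⟨∑ k, (max |a k| |b k|) ^ 2, fun y => ?_⟩
    · exact continuous_finset_sum _ fun k _ =>
        (((continuous_apply k).comp continuous_subtype_val).pow 2)
    · rw [abs_of_nonneg (Finset.sum_nonneg fun k _ => sq_nonneg _)]
      refine Finset.sum_le_sum fun k _ => ?_
      obtain ⟨hl, hr⟩ := abs_le.mp (hbnd y k)
      exact sq_le_sq' (by linarith) hr
  -- extract a.e. data
  have hfR := hf
  rw [hR] at hfR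
  obtain ⟨⟨M, hM⟩, hnull⟩ := hfR
  have hM' : ∀ y, |f y| ≤ |M| := fun y => (hM y).trans (le_abs_self M)
  have hcont : ∀ᵐ x ∂μ, ContinuousAt f x := ae_iff.mpr hnull
  have hprall : ∀ᵐ x ∂μ, ∀ k : Fin N,
      Tendsto (fun n => T n (fun y : K => (y : Fin N → ℝ) k) x) atTop
        (𝓝 ((x : Fin N → ℝ) k)) := ae_all_iff.mpr htestpr
  have hnprall : ∀ᵐ x ∂μ, ∀ k : Fin N,
      Tendsto (fun n => T n (fun y : K => -((y : Fin N → ℝ) k)) x) atTop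
        (𝓝 (-((x : Fin N → ℝ) k))) := ae_all_iff.mpr htestprneg
  filter_upwards [htest1, htestsq, hprall, hnprall, hcont] with x hA hQlim hprx hnprx hcx
  -- local abbreviations
  set c : ℝ := ∑ k, ((x : Fin N → ℝ) k) ^ 2 with hcdef
  set φ : K → ℝ := fun y => ∑ k, ((y : Fin N → ℝ) k - (x : Fin N → ℝ) k) ^ 2 with hφdef
  set l : K → ℝ := ∑ k, (-2 * (x : Fin N → ℝ) k) • (fun y : K => (y : Fin N → ℝ) k) with hldef
  have hc0 : 0 ≤ c := Finset.sum_nonneg fun k _ => sq_nonneg _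
  have hlR : l ∈ R := Rsum Finset.univ _ fun k _ => Rsmul _ _ (hmem_pr k)
  have hφeq : φ = ((fun y : K => ∑ k, ((y : Fin N → ℝ) k) ^ 2) + l)
      + c • (fun _ : K => (1 : ℝ)) := by
    funext y
    simp only [hφdef, hldef, hcdef, Pi.add_apply, Pi.smul_apply, Finset.sum_apply,
      smul_eq_mul, mul_one]
    rw [← Finset.sum_add_distrib, ← Finset.sum_add_distrib]
    exact Finset.sum_congr rfl fun k _ => by ring
  have hφR : φ ∈ R := by
    rw [hφeq]
    exact Radd _ (Radd _ hmem_q _ hlR) _ (Rsmul c _ oneR)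
  have hφ0 : (0 : K → ℝ) ≤ φ := by
    rw [Pi.le_def]
    intro y
    simp only [hφdef, Pi.zero_apply]
    exact Finset.sum_nonneg fun k _ => sq_nonneg _
  -- Step 1 : T n φ x → 0
  have hSnonneg : ∀ n, 0 ≤ T n φ x := by
    intro n
    have h := Pi.le_def.mp (hmono n 0 hzeroR φ hφR hφ0) x
    rw [hT0 n] at h
    simpa using h
  have hSle : ∀ n, T n φ x ≤ T n (fun y : K => ∑ k, ((y : Fin N → ℝ) k) ^ 2) x
      + (∑ k, T n ((-2 * (x : Fin N → ℝ) k) • (fun y : K => (y : Fin N → ℝ) k)) x)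
      + c * T n (fun _ : K => (1 : ℝ)) x := by
    intro n
    have e1 := congrFun (htransZ n _ (Radd _ hmem_q _ hlR) c) x
    rw [← hφeq] at e1
    simp only [Pi.add_apply, Pi.smul_apply, smul_eq_mul] at e1
    have e2 := Pi.le_def.mp (hsubadd n _ hmem_q l hlR) x
    simp only [Pi.add_apply] at e2
    have e3' := Tsum n Finset.univ
      (fun k => (-2 * (x : Fin N → ℝ) k) • (fun y : K => (y : Fin N → ℝ) k))
      (fun k _ => Rsmul _ _ (hmem_pr k))
    rw [← hldef] at e3'
    have e3 := Pi.le_def.mp e3' x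
    simp only [Finset.sum_apply] at e3
    linarith
  have hu : ∀ k : Fin N,
      Tendsto (fun n => T n ((-2 * (x : Fin N → ℝ) k) • (fun y : K => (y : Fin N → ℝ) k)) x)
        atTop (𝓝 (-2 * (x : Fin N → ℝ) k * (x : Fin N → ℝ) k)) := by
    intro k
    rcases le_or_gt 0 (-2 * (x : Fin N → ℝ) k) with h | h
    · have heq : ∀ n, T n ((-2 * (x : Fin N → ℝ) k) • (fun y : K => (y : Fin N → ℝ) k)) x
          = (-2 * (x : Fin N → ℝ) k) * T n (fun y : K => (y : Fin N → ℝ) k) x := by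
        intro n
        rw [hhom n _ h _ (hmem_pr k)]
        simp
      simp only [heq]
      exact tendsto_const_nhds.mul (hprx k)
    · have hc2 : (0 : ℝ) ≤ 2 * (x : Fin N → ℝ) k := by linarith
      have heq2 : (-2 * (x : Fin N → ℝ) k) • (fun y : K => (y : Fin N → ℝ) k)
          = (2 * (x : Fin N → ℝ) k) • (fun y : K => -((y : Fin N → ℝ) k)) := by
        funext y
        simp only [Pi.smul_apply, smul_eq_mul]
        ring
      have heq : ∀ n, T n ((-2 * (x : Fin N → ℝ) k) • (fun y : K => (y : Fin N → ℝ) k)) x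
          = (2 * (x : Fin N → ℝ) k) * T n (fun y : K => -((y : Fin N → ℝ) k)) x := by
        intro n
        rw [heq2, hhom n _ hc2 _ (hmem_npr k)]
        simp
      simp only [heq]
      have heq3 : -2 * (x : Fin N → ℝ) k * (x : Fin N → ℝ) k
          = 2 * (x : Fin N → ℝ) k * -((x : Fin N → ℝ) k) := by ring
      rw [heq3]
      exact tendsto_const_nhds.mul (hnprx k)
  have hWlim : Tendsto (fun n => T n (fun y : K => ∑ k, ((y : Fin N → ℝ) k) ^ 2) x
      + (∑ k, T n ((-2 * (x : Fin N → ℝ) k) • (fun y : K => (y : Fin N → ℝ) k)) x)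
      + c * T n (fun _ : K => (1 : ℝ)) x) atTop
      (𝓝 (c + (∑ k, -2 * (x : Fin N → ℝ) k * (x : Fin N → ℝ) k) + c * 1)) :=
    (hQlim.add (tendsto_finset_sum _ fun k _ => hu k)).add (tendsto_const_nhds.mul hA)
  have hWzero : c + (∑ k, -2 * (x : Fin N → ℝ) k * (x : Fin N → ℝ) k) + c * 1 = 0 := by
    have hs : ∑ k, -2 * (x : Fin N → ℝ) k * (x : Fin N → ℝ) k = -2 * c := by
      rw [hcdef, Finset.mul_sum]
      exact Finset.sum_congr rfl fun k _ => by ring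
    rw [hs]; ring
  rw [hWzero] at hWlim
  have hS : Tendsto (fun n => T n φ x) atTop (𝓝 0) :=
    tendsto_of_tendsto_of_tendsto_of_le_of_le tendsto_const_nhds hWlim hSnonneg hSle
  -- Step 2 : conclude
  rw [Metric.tendsto_atTop]
  intro ε hε
  have hε₁pos : 0 < ε / 3 := by linarith
  obtain ⟨δ, hδpos, hδ⟩ := Metric.continuousAt_iff.mp hcx (ε / 3) hε₁pos
  set C : ℝ := 2 * |M| / δ ^ 2 with hCdef
  have hC0 : 0 ≤ C := by positivity
  have key : ∀ y : K, |f y - f x| ≤ ε / 3 + C * φ y := by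
    intro y
    have hφy : 0 ≤ φ y := by
      show (0:ℝ) ≤ ∑ k, ((y : Fin N → ℝ) k - (x : Fin N → ℝ) k) ^ 2
      exact Finset.sum_nonneg fun k _ => sq_nonneg _
    rcases lt_or_ge (φ y) (δ ^ 2) with h | h
    · have hd : dist y x < δ := by
        rw [Subtype.dist_eq, dist_pi_lt_iff hδpos]
        intro k
        rw [Real.dist_eq]
        have hk : ((y : Fin N → ℝ) k - (x : Fin N → ℝ) k) ^ 2 < δ ^ 2 := by
          refine lt_of_le_of_lt ?_ h
          show ((y : Fin N → ℝ) k - (x : Fin N → ℝ) k) ^ 2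
            ≤ ∑ j, ((y : Fin N → ℝ) j - (x : Fin N → ℝ) j) ^ 2
          exact Finset.single_le_sum
            (f := fun j : Fin N => ((y : Fin N → ℝ) j - (x : Fin N → ℝ) j) ^ 2)
            (fun j _ => sq_nonneg _) (Finset.mem_univ k)
        nlinarith [abs_nonneg ((y : Fin N → ℝ) k - (x : Fin N → ℝ) k),
          sq_abs ((y : Fin N → ℝ) k - (x : Fin N → ℝ) k)]
      have hdf := hδ hd
      rw [Real.dist_eq] at hdf
      nlinarith [mul_nonneg hC0 hφy]
    · have h2M : |f y - f x| ≤ 2 * |M| := by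
        obtain ⟨h1, h2⟩ := abs_le.mp (hM' y)
        obtain ⟨h3, h4⟩ := abs_le.mp (hM' x)
        rw [abs_le]
        constructor <;> linarith
      have hCφ : 2 * |M| ≤ C * φ y := by
        have : C * δ ^ 2 ≤ C * φ y := mul_le_mul_of_nonneg_left h hC0
        have hCd : C * δ ^ 2 = 2 * |M| := by
          rw [hCdef]
          field_simp
        linarith
      linarith
  have hup : ∀ n, T n f x ≤ C * T n φ x + (f x + ε / 3) * T n (fun _ : K => (1 : ℝ)) x := by
    intro n
    have hle : f ≤ C • φ + (f x + ε / 3) • (fun _ : K => (1 : ℝ)) := by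
      rw [Pi.le_def]
      intro y
      simp only [Pi.add_apply, Pi.smul_apply, smul_eq_mul, mul_one]
      have h1 := (abs_le.mp (key y)).2
      linarith
    have hCφR : (C • φ) ∈ R := Rsmul C _ hφR
    have h1 := Pi.le_def.mp (hmono n f hf _ (Radd _ hCφR _ (Rsmul _ _ oneR)) hle) x
    have h2 := congrFun (htransZ n (C • φ) hCφR (f x + ε / 3)) x
    have h3 := congrFun (hhom n C hC0 φ hφR) x
    simp only [Pi.add_apply, Pi.smul_apply, smul_eq_mul] at h1 h2 h3
    linarith
  have hlow : ∀ n, (f x - ε / 3) * T n (fun _ : K => (1 : ℝ)) x - C * T n φ x ≤ T n f x := by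
    intro n
    have hmemL : ((-C) • φ) ∈ R := Rsmul (-C) _ hφR
    have hle : (-C) • φ + (f x - ε / 3) • (fun _ : K => (1 : ℝ)) ≤ f := by
      rw [Pi.le_def]
      intro y
      simp only [Pi.add_apply, Pi.smul_apply, smul_eq_mul, mul_one]
      have h1 := (abs_le.mp (key y)).1
      linarith
    have h1 := Pi.le_def.mp (hmono n _ (Radd _ hmemL _ (Rsmul _ _ oneR)) f hf hle) x
    have h2 := congrFun (htransZ n ((-C) • φ) hmemL (f x - ε / 3)) x
    have h3 := congrFun (hhom n C hC0 φ hφR) x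
    have h4 : (0 : K → ℝ) ≤ T n ((-C) • φ) + T n (C • φ) := by
      have hzero : (-C) • φ + C • φ = (0 : K → ℝ) := by
        funext y
        simp only [Pi.add_apply, Pi.smul_apply, smul_eq_mul, Pi.zero_apply]
        ring
      have h5 := hsubadd n _ hmemL _ (Rsmul C _ hφR)
      rw [hzero, hT0 n] at h5
      exact h5
    have h6 := Pi.le_def.mp h4 x
    simp only [Pi.add_apply, Pi.smul_apply, smul_eq_mul, Pi.zero_apply] at h1 h2 h3 h6
    linarith
  have hUlim : Tendsto (fun n => C * T n φ x + (f x + ε / 3) * T n (fun _ : K => (1 : ℝ)) x)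
      atTop (𝓝 (C * 0 + (f x + ε / 3) * 1)) :=
    (tendsto_const_nhds.mul hS).add (tendsto_const_nhds.mul hA)
  have hLlim : Tendsto (fun n => (f x - ε / 3) * T n (fun _ : K => (1 : ℝ)) x - C * T n φ x)
      atTop (𝓝 ((f x - ε / 3) * 1 - C * 0)) :=
    (tendsto_const_nhds.mul hA).sub (tendsto_const_nhds.mul hS)
  have hUev : ∀ᶠ n in atTop,
      C * T n φ x + (f x + ε / 3) * T n (fun _ : K => (1 : ℝ)) x < f x + ε := by
    refine hUlim.eventually_lt_const ?_
    nlinarith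
  have hLev : ∀ᶠ n in atTop,
      f x - ε < (f x - ε / 3) * T n (fun _ : K => (1 : ℝ)) x - C * T n φ x := by
    refine hLlim.eventually_const_lt ?_
    nlinarith
  obtain ⟨N₀, hN₀⟩ := eventually_atTop.mp (hUev.and hLev)
  refine ⟨N₀, fun n hn => ?_⟩
  obtain ⟨hU', hL'⟩ := hN₀ n hn
  rw [Real.dist_eq, abs_lt]
  constructor
  · linarith [hlow n]
  · linarith [hup n]
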